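/- The function f : [0,2] → ℝ defined by f(x) = −2√(2x) + x + 2 satisfies f(0) = 2, f(2) = 0, f(1/2) = 1/2, and the fixed-point relation f(x) = f(4x)/2 + 1 − x for all x ∈ [0, 1/2]. -/

import Mathlib

/-- the function `f(x) = −2√(2x) + x + 2` on `[0,2]` satisfies
`f(0) = 2`, `f(2) = 0`, `f(1/2) = 1/2`, and the fixed-point relation
`f(x) = f(4x)/2 + 1 − x` for all `x ∈ [0, 1/2]`. -/
theorem expert_frontier_fixed_point (f : ℝ → ℝ)
    (hf : ∀ x ∈ Set.Icc (0:ℝ) 2, f x = -2 * Real.sqrt (2 * x) + x + 2) :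
    f 0 = 2 ∧ f 2 = 0 ∧ f (1/2) = 1/2 ∧
      ∀ x ∈ Set.Icc (0:ℝ) (1/2), f x = f (4 * x) / 2 + 1 - x := by
  refine ⟨?_, ?_, ?_, ?_⟩
  · rw [hf 0 (by norm_num)]; simp
  · rw [hf 2 (by norm_num)]
    norm_num
  · rw [hf (1/2) (by norm_num)]
    norm_num
  · intro x hx
    obtain ⟨h0, h1⟩ := hx
    rw [hf x ⟨h0, by linarith⟩, hf (4*x) ⟨by linarith, by linarith⟩]
    have : Real.sqrt (2 * (4 * x)) = 2 * Real.sqrt (2 * x) := by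
      rw [show 2 * (4 * x) = 2^2 * (2 * x) by ring,
        Real.sqrt_mul (by positivity), Real.sqrt_sq (by norm_num)]
    rw [this]; ring
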